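/- Let B, R > 0 and ℓ > 2R, and set x₂* = −i·√(ℓ²/4 − R²). Then the critical value of the phase is s₀(0, x₂*) = (Bℓ/4)·√(ℓ² − 4R²) − BR²·ln((ℓ + √(ℓ² − 4R²))/(2R)). -/

import Mathlib

/-- The phase function `s₀` of the paper, with parameters `B`, `R`, `ℓ`,
using the principal branch `Complex.log` of the complex logarithm. -/
noncomputable def s0 (B R ℓ : ℝ) (x₁ x₂ : ℂ) : ℂ :=
  ((B : ℂ) / 4) * (x₁ + (ℓ : ℂ) / 2) ^ 2 + ((B : ℂ) / 4) * (x₁ - (ℓ : ℂ) / 2) ^ 2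
    + ((B : ℂ) / 2) * x₂ ^ 2 - (B : ℂ) * (R : ℂ) ^ 2 / 2
    + Complex.I * ((B : ℂ) * (ℓ : ℂ) / 2) * x₂
    - ((B : ℂ) * (R : ℂ) ^ 2 / 2) * Complex.log (((ℓ : ℂ) / 2 + x₁ + Complex.I * x₂) / (R : ℂ))
    - ((B : ℂ) * (R : ℂ) ^ 2 / 2) * Complex.log (((ℓ : ℂ) / 2 - x₁ + Complex.I * x₂) / (R : ℂ))

/-- the critical value of the phase is
`s₀(0, x₂*) = (Bℓ/4)·√(ℓ² − 4R²) − BR²·ln((ℓ + √(ℓ² − 4R²))/(2R))`. -/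
theorem s0_critical_value (B R ℓ : ℝ) (hB : 0 < B) (hR : 0 < R) (hℓ : 2 * R < ℓ) :
    s0 B R ℓ 0 (-(Complex.I * (Real.sqrt (ℓ ^ 2 / 4 - R ^ 2) : ℂ)))
      = ((B * ℓ / 4 * Real.sqrt (ℓ ^ 2 - 4 * R ^ 2)
          - B * R ^ 2 * Real.log ((ℓ + Real.sqrt (ℓ ^ 2 - 4 * R ^ 2)) / (2 * R)) : ℝ) : ℂ) := by
  have hRpos : (0:ℝ) < R := hR
  have hℓpos : (0:ℝ) < ℓ := lt_trans (by linarith) hℓ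
  have hnn : (0:ℝ) ≤ ℓ ^ 2 / 4 - R ^ 2 := by nlinarith
  set s : ℝ := Real.sqrt (ℓ ^ 2 / 4 - R ^ 2) with hs
  have hs_sq : s ^ 2 = ℓ ^ 2 / 4 - R ^ 2 := Real.sq_sqrt hnn
  have hs_nn : (0:ℝ) ≤ s := Real.sqrt_nonneg _
  have h2s : Real.sqrt (ℓ ^ 2 - 4 * R ^ 2) = 2 * s := by
    rw [hs, ← Real.sqrt_mul_self (by norm_num : (0:ℝ) ≤ 2), ← Real.sqrt_mul (by norm_num)]
    ring_nf
  -- simplify the log argument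
  have harg : ((ℓ : ℂ) / 2 + 0 + Complex.I * (-(Complex.I * (s : ℂ)))) / (R : ℂ)
      = (((ℓ / 2 + s) / R : ℝ) : ℂ) := by
    push_cast
    have : Complex.I * Complex.I = -1 := Complex.I_mul_I
    field_simp
    ring_nf
    rw [Complex.I_sq]
    ring
  have harg' : ((ℓ : ℂ) / 2 - 0 + Complex.I * (-(Complex.I * (s : ℂ)))) / (R : ℂ)
      = (((ℓ / 2 + s) / R : ℝ) : ℂ) := by
    push_cast
    field_simp
    ring_nf
    rw [Complex.I_sq]
    ring
  have hlog : Complex.log ((((ℓ / 2 + s) / R : ℝ)) : ℂ)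
      = ((Real.log ((ℓ / 2 + s) / R) : ℝ) : ℂ) := by
    rw [Complex.ofReal_log]
    positivity
  have hlogeq : Real.log ((ℓ / 2 + s) / R)
      = Real.log ((ℓ + Real.sqrt (ℓ ^ 2 - 4 * R ^ 2)) / (2 * R)) := by
    rw [h2s]
    congr 1
    field_simp
  rw [s0, harg, harg', hlog, hlogeq, h2s]
  have hss : ((s:ℝ):ℂ) ^ 2 = ((ℓ:ℂ) ^ 2 / 4 - (R:ℂ) ^ 2) := by
    exact_mod_cast congrArg (fun x : ℝ => (x : ℂ)) hs_sq
  push_cast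
  linear_combination ((B:ℂ)/2 * (s:ℂ)^2 - (B:ℂ)*(ℓ:ℂ)/2 * (s:ℂ)) * Complex.I_sq
    + (-(B:ℂ)/2) * hss
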